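/- For every y ∈ ℝ, (1/(4π)) ∫_{-π}^{π} log(cosh(y) - cos(x)) dx = (1/2)(|y| - log 2). -/

import Mathlib

open Real MeasureTheory

lemma pointwise_hasSum {r x : ℝ} (h0 : 0 < r) (h1 : r < 1) :
    HasSum (fun n : ℕ => r ^ n * Real.cos (n * x) / n)
      (-(1/2) * Real.log (1 - 2*r*Real.cos x + r^2)) := by
  set z : ℂ := (r:ℂ) * Complex.exp (x * Complex.I) with hz
  have hnz : ‖z‖ < 1 := by
    rw [hz, norm_mul, Complex.norm_exp_ofReal_mul_I, Complex.norm_real, Real.norm_eq_abs,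
      abs_of_pos h0, mul_one]
    exact h1
  have H2 := Complex.hasSum_re (Complex.hasSum_taylorSeries_neg_log hnz)
  convert H2 using 2 with n
  · have hzn : z ^ n = ((r^n : ℝ) : ℂ) * Complex.exp (((n*x : ℝ) : ℂ) * Complex.I) := by
      rw [hz, mul_pow, ← Complex.exp_nat_mul]
      push_cast; ring_nf
    have hre : (z^n).re = r^n * Real.cos (n*x) := by
      rw [hzn, Complex.re_ofReal_mul, Complex.exp_ofReal_mul_I_re]
    have him : (z^n).im = r^n * Real.sin (n*x) := by
      rw [hzn, Complex.im_ofReal_mul, Complex.exp_ofReal_mul_I_im]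
    rw [Complex.div_re, hre, him, Complex.normSq_natCast]
    rcases Nat.eq_zero_or_pos n with rfl | hn
    · simp
    · have hcn : ((n:ℂ)).re = (n:ℝ) := by simp
      have hcni : ((n:ℂ)).im = 0 := by simp
      rw [hcn, hcni]
      have : (n:ℝ) ≠ 0 := Nat.cast_ne_zero.mpr hn.ne'
      field_simp
      ring
  · have habs : ‖1 - z‖ ^ 2 = 1 - 2*r*Real.cos x + r^2 := by
      rw [Complex.sq_norm, Complex.normSq_apply]
      have h1re : (1 - z).re = 1 - r * Real.cos x := by
        simp [hz, Complex.mul_re, Complex.exp_ofReal_mul_I_re, Complex.exp_ofReal_mul_I_im]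
      have h1im : (1 - z).im = -(r * Real.sin x) := by
        simp [hz, Complex.mul_im, Complex.exp_ofReal_mul_I_re, Complex.exp_ofReal_mul_I_im]
      rw [h1re, h1im]
      have := Real.sin_sq_add_cos_sq x
      ring_nf
      nlinarith [Real.sin_sq_add_cos_sq x]
    have hzne : (1:ℂ) - z ≠ 0 := by
      intro h
      rw [sub_eq_zero] at h
      have : ‖z‖ = 1 := by rw [← h]; simp
      linarith [hnz, this]
    rw [Complex.neg_re, Complex.log_re]
    rw [← habs]
    rw [Real.log_pow]
    push_cast
    ring

lemma integral_cos_nat (n : ℕ) (hn : n ≠ 0) : ∫ x in (-π)..π, Real.cos (n * x) = 0 := by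
  have h : (n:ℝ) ≠ 0 := Nat.cast_ne_zero.mpr hn
  rw [intervalIntegral.integral_comp_mul_left (fun x => Real.cos x) h]
  simp [mul_comm π, Real.sin_nat_mul_pi]

lemma lemA {r : ℝ} (h0 : 0 < r) (h1 : r < 1) :
    ∫ x in (-π)..π, Real.log (1 - 2*r*Real.cos x + r^2) = 0 := by
  have key : HasSum (fun n : ℕ => ∫ x in (-π)..π, r ^ n * Real.cos (n * x) / n)
      (∫ x in (-π)..π, -(1/2) * Real.log (1 - 2*r*Real.cos x + r^2)) := by
    apply intervalIntegral.hasSum_integral_of_dominated_convergence (fun n _ => r ^ n)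
    · intro n
      exact (Continuous.aestronglyMeasurable (by continuity))
    · intro n
      filter_upwards with t ht
      rcases Nat.eq_zero_or_pos n with rfl | hn
      · simp
      · have h2 : |Real.cos (n*t)| ≤ 1 := Real.abs_cos_le_one _
        have h3 : (1:ℝ) ≤ n := by exact_mod_cast hn
        rw [Real.norm_eq_abs, abs_div, abs_mul, abs_of_pos (pow_pos h0 n), Nat.abs_cast]
        calc r ^ n * |Real.cos (n*t)| / n ≤ r ^ n * 1 / 1 := by
              apply div_le_div₀ (by positivity) (by nlinarith [pow_pos h0 n]) one_pos h3
          _ = r ^ n := by ring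
    · filter_upwards with t ht
      exact summable_geometric_of_lt_one h0.le h1
    · exact intervalIntegrable_const
    · filter_upwards with t ht
      exact pointwise_hasSum h0 h1
  have hzero : ∀ n : ℕ, (∫ x in (-π)..π, r ^ n * Real.cos (n * x) / n) = 0 := by
    intro n
    rcases Nat.eq_zero_or_pos n with rfl | hn
    · simp
    · have : (fun x => r ^ n * Real.cos (n * x) / n) = fun x => (r^n/n) * Real.cos (n*x) := by
        funext x; ring
      rw [this, intervalIntegral.integral_const_mul, integral_cos_nat n hn.ne', mul_zero]
  simp only [hzero] at key
  have h2 : (∫ x in (-π)..π, -(1/2) * Real.log (1 - 2*r*Real.cos x + r^2)) = 0 :=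
    (hasSum_zero.unique key).symm
  rw [intervalIntegral.integral_const_mul] at h2
  simpa using h2

lemma lemQpos {r : ℝ} (h0 : 0 < r) (h1 : r < 1) (x : ℝ) : 0 < 1 - 2*r*Real.cos x + r^2 := by
  nlinarith [Real.cos_le_one x, Real.neg_one_le_cos x, sq_nonneg (1 - r)]

lemma lemNe {y : ℝ} (hy : y ≠ 0) :
    ∫ x in (-π)..π, Real.log (Real.cosh y - Real.cos x) = 2*π*(|y| - Real.log 2) := by
  set c := |y| with hc
  have hcpos : 0 < c := abs_pos.mpr hy
  set r := Real.exp (-c) with hr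
  have h0 : 0 < r := Real.exp_pos _
  have h1 : r < 1 := Real.exp_lt_one_iff.mpr (by linarith)
  have key : ∀ x, Real.cosh y - Real.cos x = Real.exp c / 2 * (1 - 2*r*Real.cos x + r^2) := by
    intro x
    have h2 : Real.cosh y = (Real.exp c + Real.exp (-c)) / 2 := by
      rw [← Real.cosh_abs, ← hc, Real.cosh_eq]
    have h3 : Real.exp c * r = 1 := by rw [hr, ← Real.exp_add]; simp
    have h4 : Real.exp c * r^2 = r := by rw [pow_two, ← mul_assoc, h3, one_mul]
    have hw : Real.exp c * Real.exp (-c) = 1 := by rw [← Real.exp_add]; simp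
    rw [h2, hr]
    linear_combination (Real.cos x - Real.exp (-c)/2) * hw
  have hlog : ∀ x, Real.log (Real.cosh y - Real.cos x)
      = (c - Real.log 2) + Real.log (1 - 2*r*Real.cos x + r^2) := by
    intro x
    rw [key x, Real.log_mul (by positivity) (lemQpos h0 h1 x).ne', Real.log_div
      (Real.exp_ne_zero c) two_ne_zero, Real.log_exp]
  rw [intervalIntegral.integral_congr (g := fun x => (c - Real.log 2)
      + Real.log (1 - 2*r*Real.cos x + r^2)) (fun x _ => hlog x)]
  have hint : IntervalIntegrable (fun x => Real.log (1 - 2*r*Real.cos x + r^2)) volume (-π) π := by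
    apply Continuous.intervalIntegrable
    exact Continuous.log (by continuity) (fun x => (lemQpos h0 h1 x).ne')
  rw [intervalIntegral.integral_add intervalIntegrable_const hint, lemA h0 h1,
    intervalIntegral.integral_const]
  simp only [smul_eq_mul, add_zero]
  ring

lemma absloglemma {x : ℝ} (hx : 0 < x) (hxpi : x ≤ π) :
    |Real.log x| ≤ 2 * x ^ (-(1:ℝ)/2) + Real.log π := by
  have hpi : (1:ℝ) ≤ π := by linarith [Real.pi_gt_three]
  have hlogpi : 0 ≤ Real.log π := Real.log_nonneg hpi
  have hrp : 0 < x ^ (-(1:ℝ)/2) := Real.rpow_pos_of_pos hx _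
  rcases le_or_gt 1 x with h | h
  · rw [abs_of_nonneg (Real.log_nonneg h)]
    nlinarith [Real.log_le_log hx hxpi]
  · rw [abs_of_nonpos (Real.log_nonpos hx.le h.le)]
    have key : -Real.log x ≤ 2 * x ^ (-(1:ℝ)/2) := by
      have h2 : Real.log (x ^ (-(1:ℝ)/2)) ≤ x ^ (-(1:ℝ)/2) - 1 := Real.log_le_sub_one_of_pos hrp
      rw [Real.log_rpow hx] at h2
      nlinarith [h2]
    linarith

lemma intAbsLog : IntervalIntegrable (fun x => |Real.log (abs x)|) volume (-π) π := by
  have meas : ∀ (a b : ℝ), AEStronglyMeasurable (fun x => |Real.log (abs x)|)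
      ((volume : Measure ℝ).restrict (Set.uIoc a b)) := by
    intro a b
    exact ((Real.measurable_log.comp measurable_abs).abs).aestronglyMeasurable
  have h1 : IntervalIntegrable (fun x => |Real.log (abs x)|) volume 0 π := by
    have hbound : IntervalIntegrable (fun x => 2 * x ^ (-(1:ℝ)/2) + Real.log π) volume 0 π :=
      ((intervalIntegral.intervalIntegrable_rpow' (by norm_num)).const_mul 2).add
        intervalIntegrable_const
    apply hbound.mono_fun (meas 0 π)
    filter_upwards [MeasureTheory.ae_restrict_mem measurableSet_uIoc] with x hx
    rw [Set.uIoc_of_le Real.pi_pos.le] at hx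
    rw [Real.norm_eq_abs, abs_abs, abs_of_pos hx.1, Real.norm_eq_abs]
    refine (absloglemma hx.1 hx.2).trans (le_abs_self _)
  have h2 : IntervalIntegrable (fun x => |Real.log (abs x)|) volume (-π) 0 := by
    have := ((IntervalIntegrable.iff_comp_neg (a := 0) (b := π) (by simp)).mp h1)
    simp only [abs_neg, neg_zero] at this
    exact this.symm
  exact h2.trans h1

lemma lemZero : ∫ x in (-π)..π, Real.log (1 - Real.cos x) = 2*π*(0 - Real.log 2) := by
  set K : ℝ := |Real.log (Real.cosh 1 + 1)| + |Real.log (2/π^2)| with hK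
  set a : ℕ → ℝ := fun n => 1/(n+1) with ha
  have hapos : ∀ n, 0 < a n := fun n => by positivity
  have hale : ∀ n, a n ≤ 1 := fun n => by
    rw [ha]; rw [div_le_one (by positivity)]
    simp
  have hae : ∀ᵐ (x:ℝ), x ≠ 0 := by
    rw [ae_iff]
    convert Real.volume_singleton (a := 0) using 2
    ext x; simp
  have hlb : ∀ x : ℝ, x ∈ Set.uIoc (-π) π → 2/π^2 * x^2 ≤ 1 - Real.cos x := by
    intro x hx
    rw [Set.uIoc_of_le (by linarith [Real.pi_pos])] at hx
    have habs : |x| ≤ π := abs_le.mpr ⟨hx.1.le, hx.2⟩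
    have := Real.cos_le_one_sub_mul_cos_sq habs
    linarith
  have T1 : Filter.Tendsto (fun n => ∫ x in (-π)..π, Real.log (Real.cosh (a n) - Real.cos x))
      Filter.atTop (nhds (∫ x in (-π)..π, Real.log (1 - Real.cos x))) := by
    apply intervalIntegral.tendsto_integral_filter_of_dominated_convergence
      (fun x => K + 2 * |Real.log (abs x)|)
    · filter_upwards with n
      have hpos : ∀ x : ℝ, 0 < Real.cosh (a n) - Real.cos x := by
        intro x
        have h1 : Real.cosh 0 < Real.cosh (a n) := by
          rw [Real.cosh_lt_cosh]; simp [abs_of_pos (hapos n), hapos n]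
        have := Real.cos_le_one x
        rw [Real.cosh_zero] at h1
        linarith
      exact (Continuous.log (by continuity) (fun x => (hpos x).ne')).aestronglyMeasurable
    · filter_upwards with n
      filter_upwards [hae] with x hx0 hx
      have hx2 : 0 < 2/π^2 * x^2 := by positivity
      have hcosh1 : Real.cosh (a n) ≤ Real.cosh 1 := by
        rw [Real.cosh_le_cosh, abs_of_pos (hapos n), abs_one]; exact hale n
      have hcosh0 : 1 ≤ Real.cosh (a n) := Real.one_le_cosh _
      have htub : Real.cosh (a n) - Real.cos x ≤ Real.cosh 1 + 1 := by
        linarith [Real.neg_one_le_cos x]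
      have htlb : 2/π^2 * x^2 ≤ Real.cosh (a n) - Real.cos x := by
        have := hlb x hx; linarith
      have hlogeq : Real.log (2/π^2 * x^2) = Real.log (2/π^2) + 2 * Real.log |x| := by
        rw [Real.log_mul (by positivity) (by positivity), Real.log_abs]
        rw [show x^2 = x^(2:ℕ) by norm_num, Real.log_pow]
        push_cast; ring
      rw [Real.norm_eq_abs, abs_le]
      constructor
      · have h5 : Real.log (2/π^2 * x^2) ≤ Real.log (Real.cosh (a n) - Real.cos x) :=
          Real.log_le_log hx2 htlb
        rw [hlogeq] at h5
        have h6 : -|Real.log (2/π^2)| ≤ Real.log (2/π^2) := neg_abs_le _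
        have h7 : -(|Real.log (abs x)|) ≤ Real.log (abs x) := neg_abs_le _
        have h8 : (0:ℝ) ≤ |Real.log (Real.cosh 1 + 1)| := abs_nonneg _
        rw [hK]
        nlinarith
      · have h5 : Real.log (Real.cosh (a n) - Real.cos x) ≤ Real.log (Real.cosh 1 + 1) :=
          Real.log_le_log (by linarith) htub
        have h6 : Real.log (Real.cosh 1 + 1) ≤ |Real.log (Real.cosh 1 + 1)| := le_abs_self _
        have h8 : (0:ℝ) ≤ |Real.log (2/π^2)| := abs_nonneg _
        have h9 : (0:ℝ) ≤ |Real.log (abs x)| := abs_nonneg _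
        rw [hK]; nlinarith
    · exact intervalIntegrable_const.add (intAbsLog.const_mul 2)
    · filter_upwards [hae] with x hx0 hx
      have hx2 : 0 < 2/π^2 * x^2 := by positivity
      have hpos1 : 0 < 1 - Real.cos x := lt_of_lt_of_le hx2 (hlb x hx)
      have htend : Filter.Tendsto (fun n => Real.cosh (a n) - Real.cos x) Filter.atTop
          (nhds (1 - Real.cos x)) := by
        have h1 : Filter.Tendsto a Filter.atTop (nhds 0) := by
          rw [ha]; exact tendsto_one_div_add_atTop_nhds_zero_nat
        have h2 := (Real.continuous_cosh.tendsto 0).comp h1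
        rw [Real.cosh_zero] at h2
        exact h2.sub_const _
      exact ((Real.continuousAt_log hpos1.ne').tendsto.comp htend)
  have T2 : Filter.Tendsto (fun n => ∫ x in (-π)..π, Real.log (Real.cosh (a n) - Real.cos x))
      Filter.atTop (nhds (2*π*(0 - Real.log 2))) := by
    have heq : (fun n => ∫ x in (-π)..π, Real.log (Real.cosh (a n) - Real.cos x))
        = fun n => 2*π*(a n - Real.log 2) := by
      funext n
      rw [lemNe (hapos n).ne', abs_of_pos (hapos n)]
    rw [heq]
    have h1 : Filter.Tendsto a Filter.atTop (nhds 0) := tendsto_one_div_add_atTop_nhds_zero_nat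
    exact (h1.sub_const _).const_mul _
  exact tendsto_nhds_unique T1 T2

theorem couette_log_kernel_average (y : ℝ) :
    (1 / (4 * π)) * (∫ x in (-π)..π, Real.log (Real.cosh y - Real.cos x))
      = (1 / 2) * (|y| - Real.log 2) := by
  have hpi : π ≠ 0 := Real.pi_ne_zero
  have key : ∫ x in (-π)..π, Real.log (Real.cosh y - Real.cos x) = 2*π*(|y| - Real.log 2) := by
    rcases eq_or_ne y 0 with rfl | hy
    · simpa [Real.cosh_zero, abs_zero] using lemZero
    · exact lemNe hy
  rw [key]
  field_simp
  ring
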